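/- The function k ↦ (1−p)^k + (2/√π)·erfi(1 − (1−p)^k)·e^{−(erfi(1 − (1−p)^k))²} is strictly decreasing in k for 0 < p < 1, k ≥ 0 real. -/

import Mathlib

/-- The error function erf(x) = (2/√π)·∫₀ˣ e^{−t²} dt. -/
noncomputable def erf (x : ℝ) : ℝ :=
  (2 / Real.sqrt Real.pi) * ∫ t in (0 : ℝ)..x, Real.exp (-t ^ 2)

lemma erf_hasDerivAt (x : ℝ) :
    HasDerivAt erf ((2 / Real.sqrt Real.pi) * Real.exp (-x ^ 2)) x := by
  have hc : Continuous fun t : ℝ => Real.exp (-t ^ 2) := by continuity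
  exact ((hc.integral_hasStrictDerivAt 0 x).hasDerivAt).const_mul _

lemma erf_strictMono : StrictMono erf := by
  have hpi : 0 < Real.sqrt Real.pi := Real.sqrt_pos.2 Real.pi_pos
  apply strictMono_of_deriv_pos
  intro x
  rw [(erf_hasDerivAt x).deriv]
  positivity

lemma erf_zero : erf 0 = 0 := by simp [erf]

noncomputable def Ffun : ℝ → ℝ :=
  fun x => erf x - (2 / Real.sqrt Real.pi) * x * Real.exp (-x ^ 2)

lemma Ffun_hasDerivAt (x : ℝ) :
    HasDerivAt Ffun ((2 / Real.sqrt Real.pi) * (2 * x ^ 2 * Real.exp (-x ^ 2))) x := by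
  have h1 : HasDerivAt (fun x : ℝ => Real.exp (-x ^ 2))
      (Real.exp (-x ^ 2) * (-(2 * x))) x := by
    have := ((hasDerivAt_pow 2 x).neg).exp
    simpa [pow_one, mul_comm] using this
  have h2 : HasDerivAt (fun x : ℝ => (2 / Real.sqrt Real.pi) * x * Real.exp (-x ^ 2))
      ((2 / Real.sqrt Real.pi) * Real.exp (-x ^ 2)
        + (2 / Real.sqrt Real.pi) * x * (Real.exp (-x ^ 2) * (-(2 * x)))) x := by
    exact (((hasDerivAt_id x).const_mul (2 / Real.sqrt Real.pi)).mul h1).congr_deriv (by simp)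
  have h3 := (erf_hasDerivAt x).sub h2
  refine h3.congr_deriv ?_
  ring

lemma Ffun_strictMonoOn : StrictMonoOn Ffun (Set.Ici 0) := by
  have hpi : 0 < Real.sqrt Real.pi := Real.sqrt_pos.2 Real.pi_pos
  apply strictMonoOn_of_deriv_pos (convex_Ici 0)
  · exact Continuous.continuousOn (by
      have : Differentiable ℝ Ffun := fun x => (Ffun_hasDerivAt x).differentiableAt
      exact this.continuous)
  · intro x hx
    rw [interior_Ici] at hx
    rw [(Ffun_hasDerivAt x).deriv]
    have hx0 : 0 < x := hx
    positivity

/-- For 0 < p < 1, the function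
k ↦ (1−p)^k + (2/√π)·erfi(1−(1−p)^k)·e^{−erfi(1−(1−p)^k)²}
is strictly decreasing in the real variable k ≥ 0; equivalently, the map
t ↦ t + (2/√π)·erfi(1−t)·e^{−erfi(1−t)²} is strictly increasing on (0,1). -/
theorem stmt_9 (p : ℝ) (hp : p ∈ Set.Ioo (0 : ℝ) 1)
    (erfi : ℝ → ℝ)
    (h_inv : ∀ y ∈ Set.Ioo (-1 : ℝ) 1, erf (erfi y) = y) :
    StrictAntiOn (fun k : ℝ =>
        (1 - p) ^ k + (2 / Real.sqrt Real.pi) * erfi (1 - (1 - p) ^ k) *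
          Real.exp (-(erfi (1 - (1 - p) ^ k)) ^ 2)) (Set.Ici 0) ∧
    StrictMonoOn (fun t : ℝ =>
        t + (2 / Real.sqrt Real.pi) * erfi (1 - t) *
          Real.exp (-(erfi (1 - t)) ^ 2)) (Set.Ioo 0 1) := by
  obtain ⟨hp0, hp1⟩ := hp
  set g : ℝ → ℝ := fun t =>
    t + (2 / Real.sqrt Real.pi) * erfi (1 - t) * Real.exp (-(erfi (1 - t)) ^ 2) with hg
  -- key: g strictly mono on Ioc 0 1
  have key : StrictMonoOn g (Set.Ioc 0 1) := by
    intro t1 ht1 t2 ht2 hlt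
    have h1 : erf (erfi (1 - t1)) = 1 - t1 :=
      h_inv _ ⟨by linarith [ht1.2], by linarith [ht1.1]⟩
    have h2 : erf (erfi (1 - t2)) = 1 - t2 :=
      h_inv _ ⟨by linarith [ht2.2], by linarith [ht2.1]⟩
    set u1 := erfi (1 - t1)
    set u2 := erfi (1 - t2)
    have hu2nn : 0 ≤ u2 := by
      by_contra h
      push_neg at h
      have := erf_strictMono h
      rw [h2, erf_zero] at this
      linarith [ht2.2]
    have hu21 : u2 < u1 := by
      have : erf u2 < erf u1 := by rw [h1, h2]; linarith
      exact erf_strictMono.lt_iff_lt.1 this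
    have hF := Ffun_strictMonoOn hu2nn (le_of_lt (lt_of_le_of_lt hu2nn hu21) : (0:ℝ) ≤ u1) hu21
    unfold Ffun at hF
    rw [h1, h2] at hF
    simp only [hg]
    linarith
  constructor
  · intro k1 hk1 k2 hk2 hlt
    have hb0 : (0:ℝ) < 1 - p := by linarith
    have hb1 : 1 - p < 1 := by linarith
    have ht : (1 - p) ^ k2 < (1 - p) ^ k1 :=
      Real.rpow_lt_rpow_of_exponent_gt hb0 hb1 hlt
    have h1 : (1 - p) ^ k1 ∈ Set.Ioc (0:ℝ) 1 :=
      ⟨Real.rpow_pos_of_pos hb0 _, Real.rpow_le_one (le_of_lt hb0) (le_of_lt hb1) hk1⟩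
    have h2 : (1 - p) ^ k2 ∈ Set.Ioc (0:ℝ) 1 :=
      ⟨Real.rpow_pos_of_pos hb0 _, Real.rpow_le_one (le_of_lt hb0) (le_of_lt hb1) hk2⟩
    exact key h2 h1 ht
  · exact key.mono (Set.Ioo_subset_Ioc_self)
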